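/- Let n ≥ 1 and m with 1 ≤ m ≤ n, and write n = ν·m + r with ν = ⌊n/m⌋ and 0 ≤ r < m. For any m-tuple (n₁, …, n_m) of positive integers with n₁ + ⋯ + n_m = n, the sum ∑ G(n_i) is at least (m − r)·G(ν) + r·G(ν + 1), where G(k) := k · lg(k) + 2 · (k − 2^(lg k)). -/

import Mathlib

/-- The amount of the optimal binary tree over `n` elements. -/
def G (n : ℕ) : ℕ := n * Nat.log 2 n + 2 * (n - 2 ^ (Nat.log 2 n))

namespace OptDivAux

/-- The increment function: `G (k+1) = G k + f k`. -/
def f (k : ℕ) : ℕ := if k = 0 then 0 else Nat.log 2 k + 2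

lemma f_mono : Monotone f := by
  intro a b hab
  unfold f
  rcases Nat.eq_zero_or_pos a with h | h
  · simp [h]
  · have ha : a ≠ 0 := by omega
    have hb : b ≠ 0 := by omega
    simp only [ha, hb, if_false]
    have := Nat.log_mono_right (b := 2) hab
    omega

lemma G_eq (n : ℕ) : G n = ∑ k ∈ Finset.range n, f k := by
  induction n with
  | zero => simp [G]
  | succ n ih =>
    rw [Finset.sum_range_succ, ← ih]
    rcases Nat.eq_zero_or_pos n with h | hpos
    · subst h; simp [G, f, Nat.log_one_right]
    have hn0 : n ≠ 0 := by omega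
    have hfn : f n = Nat.log 2 n + 2 := by simp [f, hn0]
    set L := Nat.log 2 n with hL
    have ha : 2 ^ L ≤ n := Nat.pow_log_le_self 2 hn0
    have hb : n < 2 ^ (L + 1) := Nat.lt_pow_succ_log_self (by norm_num) n
    rcases Nat.lt_or_ge (n + 1) (2 ^ (L + 1)) with hcase | hcase
    · have hL' : Nat.log 2 (n + 1) = L :=
        Nat.log_eq_of_pow_le_of_lt_pow (le_trans ha (Nat.le_succ n)) hcase
      show (n + 1) * Nat.log 2 (n + 1) + 2 * ((n + 1) - 2 ^ Nat.log 2 (n + 1))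
          = n * L + 2 * (n - 2 ^ L) + f n
      rw [hL', hfn, add_one_mul]
      generalize n * L = a
      omega
    · have heq : n + 1 = 2 ^ (L + 1) := by omega
      have hL' : Nat.log 2 (n + 1) = L + 1 := by
        rw [heq, Nat.log_pow (by norm_num)]
      show (n + 1) * Nat.log 2 (n + 1) + 2 * ((n + 1) - 2 ^ Nat.log 2 (n + 1))
          = n * L + 2 * (n - 2 ^ L) + f n
      rw [hL', hfn, ← heq, mul_add, mul_one, add_one_mul]
      have h2 : 2 ^ (L + 1) = 2 * 2 ^ L := by ring
      generalize n * L = a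
      omega

end OptDivAux

open OptDivAux in
theorem optimal_division_minimizes (n m : ℕ) (hn : 1 ≤ n) (hm : 1 ≤ m) (hmn : m ≤ n)
    (u : Fin m → ℕ) (hu : ∀ i, 1 ≤ u i) (hsum : ∑ i, u i = n) :
    (m - n % m) * G (n / m) + (n % m) * G (n / m + 1) ≤ ∑ i, G (u i) := by
  classical
  set ν := n / m with hν
  set r := n % m with hr
  have hrm : r < m := Nat.mod_lt n hm
  have hdm : m * ν + r = n := Nat.div_add_mod n m
  have hνn : ν ≤ n := Nat.div_le_self n m
  have hui : ∀ i, u i ≤ n := by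
    intro i
    calc u i ≤ ∑ j, u j := Finset.single_le_sum (fun j _ => Nat.zero_le _) (Finset.mem_univ i)
    _ = n := hsum
  have hfilter : ∀ i, Finset.filter (fun k => k < u i) (Finset.range n) = Finset.range (u i) := by
    intro i
    have := hui i
    ext k
    simp only [Finset.mem_filter, Finset.mem_range]
    omega
  set c : ℕ → ℕ := fun k => (Finset.univ.filter (fun i => k < u i)).card with hc
  have hck : ∀ k, c k ≤ m := by
    intro k
    calc c k ≤ (Finset.univ : Finset (Fin m)).card := Finset.card_filter_le _ _
    _ = m := by simp
  have hGsum : ∑ i, G (u i) = ∑ k ∈ Finset.range n, c k * f k := by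
    calc ∑ i, G (u i) = ∑ i, ∑ k ∈ Finset.range (u i), f k := by simp [G_eq]
    _ = ∑ i, ∑ k ∈ Finset.range n, if k < u i then f k else 0 := by
        refine Finset.sum_congr rfl fun i _ => ?_
        rw [← hfilter i, Finset.sum_filter]
    _ = ∑ k ∈ Finset.range n, ∑ i, if k < u i then f k else 0 := Finset.sum_comm
    _ = ∑ k ∈ Finset.range n, c k * f k := by
        refine Finset.sum_congr rfl fun k _ => ?_
        rw [← Finset.sum_filter, Finset.sum_const, smul_eq_mul]
  have hcsum : ∑ k ∈ Finset.range n, c k = n := by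
    calc ∑ k ∈ Finset.range n, c k
        = ∑ k ∈ Finset.range n, ∑ i, if k < u i then 1 else 0 := by
          refine Finset.sum_congr rfl fun k _ => ?_
          rw [← Finset.sum_filter, Finset.sum_const, smul_eq_mul, mul_one]
    _ = ∑ i : Fin m, ∑ k ∈ Finset.range n, if k < u i then 1 else 0 := Finset.sum_comm
    _ = ∑ i : Fin m, ∑ k ∈ Finset.range (u i), 1 := by
          refine Finset.sum_congr rfl fun i _ => ?_
          rw [← hfilter i, Finset.sum_filter]
    _ = ∑ i, u i := by simp
    _ = n := hsum
  set A := ∑ k ∈ Finset.range ν, c k * f k with hA'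
  set B := ∑ k ∈ Finset.Ico ν n, c k * f k with hB'
  set S := ∑ k ∈ Finset.range ν, c k with hS'
  set T := ∑ k ∈ Finset.Ico ν n, c k with hT'
  set D := ∑ k ∈ Finset.range ν, (m - c k) with hD'
  have hsplitv : ∑ k ∈ Finset.range n, c k * f k = A + B := by
    rw [hA', hB', Finset.range_eq_Ico, ← Finset.sum_Ico_consecutive _ (Nat.zero_le ν) hνn,
      ← Finset.range_eq_Ico]
  have hsplitc : S + T = n := by
    rw [hS', hT', Finset.range_eq_Ico, Finset.sum_Ico_consecutive _ (Nat.zero_le ν) hνn,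
      ← Finset.range_eq_Ico, hcsum]
  have hDS : D + S = m * ν := by
    rw [hD', hS', ← Finset.sum_add_distrib]
    calc ∑ k ∈ Finset.range ν, (m - c k + c k)
        = ∑ _k ∈ Finset.range ν, m :=
          Finset.sum_congr rfl fun k _ => by have := hck k; omega
    _ = m * ν := by simp [mul_comm]
  have hT : T = D + r := by
    rw [← hDS] at hdm
    omega
  have hBge : T * f ν ≤ B := by
    calc T * f ν = ∑ k ∈ Finset.Ico ν n, c k * f ν := by rw [Finset.sum_mul]
    _ ≤ B := Finset.sum_le_sum fun k hk =>
        Nat.mul_le_mul_left _ (f_mono (Finset.mem_Ico.mp hk).1)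
  have hAge : m * ∑ k ∈ Finset.range ν, f k ≤ A + D * f ν := by
    rw [Finset.mul_sum, hD', Finset.sum_mul, hA', ← Finset.sum_add_distrib]
    refine Finset.sum_le_sum fun k hk => ?_
    have h1 : f k ≤ f ν := f_mono (le_of_lt (Finset.mem_range.mp hk))
    have h2 := hck k
    calc m * f k = c k * f k + (m - c k) * f k := by rw [← add_mul]; congr 1; omega
    _ ≤ c k * f k + (m - c k) * f ν := by
        exact Nat.add_le_add_left (Nat.mul_le_mul_left _ h1) _
  have hlhs : (m - r) * G ν + r * G (ν + 1)
      = m * (∑ k ∈ Finset.range ν, f k) + r * f ν := by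
    rw [G_eq, G_eq, Finset.sum_range_succ, mul_add]
    have hmr : m - r + r = m := by omega
    calc (m - r) * (∑ k ∈ Finset.range ν, f k)
          + (r * (∑ k ∈ Finset.range ν, f k) + r * f ν)
        = (m - r + r) * (∑ k ∈ Finset.range ν, f k) + r * f ν := by ring
    _ = m * (∑ k ∈ Finset.range ν, f k) + r * f ν := by rw [hmr]
  rw [hlhs, hGsum, hsplitv]
  calc m * (∑ k ∈ Finset.range ν, f k) + r * f ν
      ≤ (A + D * f ν) + r * f ν := Nat.add_le_add_right hAge _
  _ = A + (D + r) * f ν := by ring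
  _ = A + T * f ν := by rw [hT]
  _ ≤ A + B := Nat.add_le_add_left hBge _
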